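/- For every infinite sequence (G_n) of finite 2-connected graphs with |V(G_n)| = n, whose vertex sets are enumerated v_1, ..., v_n such that for each i with r ≤ i ≤ n there is a j with i - r ≤ j ≤ i making G_n[{v_1,...,v_j}] 2-connected, there exists a countably infinite graph G on vertices u_1, u_2, ... such that for every positive integer m the induced subgraph G[{u_1,...,u_m}] is isomorphic to G_i[{v_1,...,v_m}] for infinitely many i ≥ m, and moreover G is 2-connected. -/

import Mathlib

/-- The subgraph of `G` induced on `s` is 2-connected: it has at least three
vertices, is connected, and deleting any one of its vertices leaves it
connected. -/
def TwoConnOn {V : Type*} (G : SimpleGraph V) (s : Set V) : Prop :=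
  3 ≤ Nat.card s ∧ (G.induce s).Connected ∧
    ∀ v ∈ s, (G.induce (s \ {v})).Connected

/-- An infinite graph is 2-connected: deleting any single vertex leaves a
connected graph. -/
def TwoConnected {V : Type*} (G : SimpleGraph V) : Prop :=
  ∀ v : V, (G.induce {u | u ≠ v}).Connected

/-- **Compactness construction.** Fix `r > 2`.  Given a sequence `G_3, G_4, …` of
finite 2-connected graphs, where `G (n)` has the `n + 3` vertices `0, …, n + 2`
enumerated so that for each `i` with `r ≤ i ≤ n + 3` there is `j` with
`i - r ≤ j ≤ i` making the first `j` vertices induce a 2-connected subgraph,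
there is a countably infinite graph `H` on vertices `0, 1, 2, …` such that for
every positive `m` the subgraph induced by the first `m` vertices of `H` is
isomorphic to the subgraph induced by the first `m` vertices of `G (i)` for
infinitely many `i` with `m ≤ i + 3`, and moreover `H` is 2-connected. -/
theorem compactness_two_connected (r : ℕ) (hr : 2 < r)
    (G : ∀ n : ℕ, SimpleGraph (Fin (n + 3)))
    (h2 : ∀ n, TwoConnOn (G n) Set.univ)
    (henum : ∀ n, ∀ i : ℕ, r ≤ i → i ≤ n + 3 →
      ∃ j : ℕ, i - r ≤ j ∧ j ≤ i ∧
        TwoConnOn (G n) {k : Fin (n + 3) | (k : ℕ) < j}) :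
    ∃ H : SimpleGraph ℕ,
      (∀ m : ℕ, 0 < m →
        {i : ℕ | m ≤ i + 3 ∧
          Nonempty ((H.induce {x : ℕ | x < m}) ≃g
            ((G i).induce {k : Fin (i + 3) | (k : ℕ) < m}))}.Infinite) ∧
      TwoConnected H := by
  classical
  set U : Ultrafilter ℕ := Filter.hyperfilter ℕ with hU
  set S : ℕ → ℕ → Set ℕ := fun a b =>
    {i | ∃ (ha : a < i + 3) (hb : b < i + 3), (G i).Adj ⟨a, ha⟩ ⟨b, hb⟩} with hS
  have hSsymm : ∀ a b, S a b = S b a := by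
    intro a b; ext i
    constructor <;> rintro ⟨h1, h2, h⟩ <;> exact ⟨h2, h1, h.symm⟩
  let H : SimpleGraph ℕ :=
    { Adj := fun a b => S a b ∈ U
      symm := by constructor; intro a b h; rwa [hSsymm]
      loopless := by
        constructor
        intro a h
        have he : S a a = ∅ := by
          ext i
          simp only [hS, Set.mem_setOf_eq, Set.mem_empty_iff_false, iff_false]
          rintro ⟨h1, h2, hadj⟩
          exact (G i).loopless.irrefl _ hadj
        rw [he] at h
        exact Filter.empty_notMem (U : Filter ℕ) h }
  have hHadj : ∀ a b : ℕ, H.Adj a b ↔ S a b ∈ U := fun a b => Iff.rfl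
  -- agreement lemma
  have agree : ∀ m : ℕ, {n : ℕ | m ≤ n + 3 ∧ ∀ a b : ℕ, a < m → b < m →
      ∀ (ha : a < n + 3) (hb : b < n + 3),
        (H.Adj a b ↔ (G n).Adj ⟨a, ha⟩ ⟨b, hb⟩)} ∈ U := by
    intro m
    have h1 : {n : ℕ | m ≤ n + 3} ∈ U := by
      apply Filter.mem_hyperfilter_of_finite_compl
      apply Set.Finite.subset (Set.finite_Iio m)
      intro n hn
      simp only [Set.mem_compl_iff, Set.mem_setOf_eq, not_le] at hn
      simp only [Set.mem_Iio]; omega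
    have h3 : (⋂ p ∈ Finset.range m ×ˢ Finset.range m,
        {n : ℕ | ∀ (ha : p.1 < n + 3) (hb : p.2 < n + 3),
          (H.Adj p.1 p.2 ↔ (G n).Adj ⟨p.1, ha⟩ ⟨p.2, hb⟩)}) ∈ U := by
      rw [← Ultrafilter.mem_coe, Filter.biInter_finset_mem]
      rintro ⟨a, b⟩ hp
      by_cases hadj : H.Adj a b
      · refine Filter.mem_of_superset (hHadj a b |>.mp hadj) ?_
        rintro n ⟨ha', hb', h⟩ ha hb
        exact iff_of_true hadj h
      · have hc : (S a b)ᶜ ∈ U := Ultrafilter.compl_mem_iff_notMem.2 hadj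
        refine Filter.mem_of_superset hc ?_
        intro n hn ha hb
        refine iff_of_false hadj fun h => hn ⟨ha, hb, h⟩
    have := Filter.inter_mem h1 h3
    refine Filter.mem_of_superset this ?_
    rintro n ⟨hn1, hn2⟩
    refine ⟨hn1, fun a b ha hb ha' hb' => ?_⟩
    simp only [Set.mem_iInter] at hn2
    exact hn2 (a, b) (Finset.mem_product.2 ⟨Finset.mem_range.2 ha, Finset.mem_range.2 hb⟩) ha' hb'
  have hinf : ∀ {A : Set ℕ}, A ∈ U → A.Infinite := by
    intro A hA hfin
    exact Filter.notMem_hyperfilter_of_finite hfin hA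
  refine ⟨H, ?_, ?_⟩
  · -- part 1
    intro m hm
    refine Set.Infinite.mono ?_ (hinf (agree m))
    rintro n ⟨hn1, hn2⟩
    refine ⟨hn1, ⟨?_⟩⟩
    refine ⟨⟨fun x => ⟨⟨x.1, lt_of_lt_of_le x.2 hn1⟩, x.2⟩,
      fun k => ⟨(k.1 : ℕ), k.2⟩, fun x => rfl, fun k => rfl⟩, ?_⟩
    rintro ⟨a, ha⟩ ⟨b, hb⟩
    exact (hn2 a b ha hb _ _).symm
  · -- part 2: 2-connectedness
    intro v
    rw [SimpleGraph.connected_iff]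
    refine ⟨?_, ⟨⟨v + 1, Nat.succ_ne_self v⟩⟩⟩
    rintro ⟨a, ha⟩ ⟨b, hb⟩
    set m : ℕ := max a (max b v) + 1 with hm
    set i0 : ℕ := m + r with hi0
    obtain ⟨n, hn1, hn2⟩ := Filter.nonempty_of_mem (agree i0)
    obtain ⟨j, hj1, hj2, hj3⟩ := henum n i0 (Nat.le_add_left r m) hn1
    have hmj : m ≤ j := by omega
    have haj : a < j := by omega
    have hbj : b < j := by omega
    have hvj : v < j := by omega
    have hji : j ≤ i0 := hj2
    have h3 : ∀ x : ℕ, x < j → x < n + 3 := fun x hx => by omega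
    obtain ⟨-, -, hconn⟩ := hj3
    set vv : Fin (n + 3) := ⟨v, h3 v hvj⟩ with hvv
    have hvin : vv ∈ {k : Fin (n + 3) | (k : ℕ) < j} := hvj
    have hc := hconn vv hvin
    -- homomorphism into H minus v
    let f : ((G n).induce ({k : Fin (n + 3) | (k : ℕ) < j} \ {vv})) →g
        (H.induce {u : ℕ | u ≠ v}) :=
      { toFun := fun k => ⟨(k.1 : ℕ), by
          have hne : k.1 ≠ vv := k.2.2
          intro hval
          exact hne (Fin.ext hval)⟩
        map_rel' := by
          rintro ⟨⟨x, hx3⟩, hx⟩ ⟨⟨y, hy3⟩, hy⟩ hadj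
          have hxj : x < j := hx.1
          have hyj : y < j := hy.1
          exact (hn2 x y (by omega) (by omega) hx3 hy3).mpr hadj }
    have hma : (⟨a, h3 a haj⟩ : Fin (n+3)) ∈ {k : Fin (n + 3) | (k : ℕ) < j} \ {vv} := by
      refine ⟨haj, ?_⟩
      simp only [Set.mem_singleton_iff, hvv, Fin.ext_iff]
      exact ha
    have hmb : (⟨b, h3 b hbj⟩ : Fin (n+3)) ∈ {k : Fin (n + 3) | (k : ℕ) < j} \ {vv} := by
      refine ⟨hbj, ?_⟩
      simp only [Set.mem_singleton_iff, hvv, Fin.ext_iff]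
      exact hb
    have hreach := (hc.preconnected ⟨⟨a, h3 a haj⟩, hma⟩ ⟨⟨b, h3 b hbj⟩, hmb⟩).map f
    exact hreach
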